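/- Threshold structure of the optimal policy (Theorem 1, Property 2, first part): let V : 𝒬 → ℝ be monotone and let u* ∈ 𝒰 be such that u*_n = m ∈ M_n for some BS n ∈ {0,…,N}. Then for every Q ∈ 𝒬 with Q_{n,m} ≥ φ_{u*}⁻(Q_{−n,−m}), one has Δ_{u*,v}(Q) ≤ 0 for every v ∈ 𝒰; in particular u* attains min_{u∈𝒰} J_V(Q,u), i.e., the optimal scheduling of content m by BS n is of threshold type in Q_{n,m}. -/

import Mathlib

open Finset

namespace HetNet

/-- The queue index set `I = {(n,m) : 0 ≤ n ≤ N, m ∈ M_n}`. -/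
abbrev Idx {N M : ℕ} (cache : Fin (N + 1) → Finset (Fin M)) : Type :=
  {p : Fin (N + 1) × Fin M // p.2 ∈ cache p.1}

/-- The feasible action space `𝒰`: each BS schedules a cached content or idles (`none`),
and the MBS (BS `0`) and the SBSs do not operate concurrently. -/
def Feasible {N M : ℕ} (cache : Fin (N + 1) → Finset (Fin M))
    (u : Fin (N + 1) → Option (Fin M)) : Prop :=
  (∀ n m, u n = some m → m ∈ cache n) ∧ (u 0 ≠ none → ∀ n, n ≠ 0 → u n = none)

instance {N M : ℕ} (cache : Fin (N + 1) → Finset (Fin M)) :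
    DecidablePred (Feasible cache) := by
  intro u; unfold Feasible; infer_instance

instance {N M : ℕ} (cache : Fin (N + 1) → Finset (Fin M)) :
    Nonempty {u : Fin (N + 1) → Option (Fin M) // Feasible cache u} :=
  ⟨⟨fun _ => none, by
    refine ⟨fun _ _ h => ?_, fun h => absurd rfl h⟩; cases h⟩⟩

/-- Queue `(n,m)` is served by action `u`. -/
def Served {N M : ℕ} (u : Fin (N + 1) → Option (Fin M)) (n : Fin (N + 1)) (m : Fin M) : Prop :=
  (n = 0 ∧ u 0 = some m) ∨ (n ≠ 0 ∧ (u 0 = some m ∨ u n = some m))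

instance {N M : ℕ} (u : Fin (N + 1) → Option (Fin M)) (n : Fin (N + 1)) (m : Fin M) :
    Decidable (Served u n m) := by unfold Served; infer_instance

/-- The queue transition map `T(Q,u,A)`. -/
def T {N M : ℕ} {cache : Fin (N + 1) → Finset (Fin M)} (bound : Idx cache → ℕ)
    (Q : Idx cache → ℕ) (u : Fin (N + 1) → Option (Fin M)) (A : Idx cache → ℕ) :
    Idx cache → ℕ := fun i =>
  if Served u i.val.1 i.val.2 then min (A i) (bound i) else min (Q i + A i) (bound i)

/-- The network power cost `p(u) = Σ_n p(n, u_n)` (with `p(n,0) = 0` for an idling BS). -/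
def pcost {N M : ℕ} (p : Fin (N + 1) → Fin M → ℝ) (u : Fin (N + 1) → Option (Fin M)) : ℝ :=
  ∑ n, (u n).elim 0 (p n)

/-- The sum request queue length `d(Q)`. -/
def dcost {N M : ℕ} {cache : Fin (N + 1) → Finset (Fin M)} (Q : Idx cache → ℕ) : ℝ :=
  ∑ i, (Q i : ℝ)

/-- The per-stage cost `g(Q,u) = d(Q) + w·p(u)`. -/
def gcost {N M : ℕ} (p : Fin (N + 1) → Fin M → ℝ) (w : ℝ)
    {cache : Fin (N + 1) → Finset (Fin M)}
    (Q : Idx cache → ℕ) (u : Fin (N + 1) → Option (Fin M)) : ℝ :=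
  dcost Q + w * pcost p u

/-- The state-action cost `J_V(Q,u) = g(Q,u) + Σ_{A∈𝒜} P(A)·V(T(Q,u,A))`. -/
def Jcost {N M : ℕ} (p : Fin (N + 1) → Fin M → ℝ) (w : ℝ)
    {cache : Fin (N + 1) → Finset (Fin M)} (bound : Idx cache → ℕ)
    {ι : Type} [Fintype ι] (P : ι → ℝ) (A : ι → Idx cache → ℕ)
    (V : (Idx cache → ℕ) → ℝ) (Q : Idx cache → ℕ)
    (u : Fin (N + 1) → Option (Fin M)) : ℝ :=
  gcost p w Q u + ∑ a, P a * V (T bound Q u (A a))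

open scoped Classical in
/-- `Φ_u(Q_{−n,−m})`: the set of queue lengths `q ∈ {0,…,N_{n,m}}` at coordinate `i = (n,m)`
such that action `u` dominates every other feasible action at the state obtained from `Q`
by replacing its `(n,m)`-coordinate with `q`.  Its `Finset.max` (valued in `WithBot ℕ`,
`⊥` = −∞) is `φ_u⁺(Q_{−n,−m})`, and its `Finset.min` (valued in `WithTop ℕ`, `⊤` = +∞)
is `φ_u⁻(Q_{−n,−m})`. -/
noncomputable def Phi {N M : ℕ} (p : Fin (N + 1) → Fin M → ℝ) (w : ℝ)
    {cache : Fin (N + 1) → Finset (Fin M)} (bound : Idx cache → ℕ)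
    {ι : Type} [Fintype ι] (P : ι → ℝ) (A : ι → Idx cache → ℕ)
    (V : (Idx cache → ℕ) → ℝ) (u : Fin (N + 1) → Option (Fin M))
    (i : Idx cache) (Q : Idx cache → ℕ) : Finset ℕ :=
  (Finset.range (bound i + 1)).filter fun q =>
    ∀ v, Feasible cache v → v ≠ u →
      Jcost p w bound P A V (Function.update Q i q) u -
        Jcost p w bound P A V (Function.update Q i q) v ≤ 0

/-- Theorem 1, Property 2, first part: threshold structure of the optimal
policy: let `V` be monotone and `u* ∈ 𝒰` with `u*_n = m ∈ M_n` for some BS `n`.  Then for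
every `Q ∈ 𝒬` with `Q_{n,m} ≥ φ_{u*}⁻(Q_{−n,−m})`, one has `Δ_{u*,v}(Q) ≤ 0` for every
`v ∈ 𝒰`; in particular `u*` attains `min_{u∈𝒰} J_V(Q,u)`. -/
theorem optimal_threshold {N M : ℕ} (cache : Fin (N + 1) → Finset (Fin M))
    (hcache0 : ∀ m : Fin M, m ∈ cache 0)
    (bound : Idx cache → ℕ)
    (p : Fin (N + 1) → Fin M → ℝ) (hp : ∀ n m, 0 ≤ p n m)
    (w : ℝ) (hw : 0 ≤ w)
    {ι : Type} [Fintype ι] (P : ι → ℝ) (A : ι → Idx cache → ℕ)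
    (hP : ∀ a, 0 ≤ P a) (hPsum : ∑ a, P a = 1)
    (V : (Idx cache → ℕ) → ℝ)
    (hV : ∀ Q₁ Q₂ : Idx cache → ℕ, (∀ i, Q₁ i ≤ bound i) → (∀ i, Q₂ i ≤ bound i) →
      (∀ i, Q₁ i ≤ Q₂ i) → V Q₁ ≤ V Q₂)
    (ustar : Fin (N + 1) → Option (Fin M)) (hustar : Feasible cache ustar)
    (n : Fin (N + 1)) (m : Fin M) (hm : m ∈ cache n) (hun : ustar n = some m)
    (Q : Idx cache → ℕ) (hQ : ∀ i, Q i ≤ bound i)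
    (hthr : (Phi p w bound P A V ustar ⟨(n, m), hm⟩ Q).min ≤ (Q ⟨(n, m), hm⟩ : WithTop ℕ)) :
    (∀ v, Feasible cache v →
        Jcost p w bound P A V Q ustar - Jcost p w bound P A V Q v ≤ 0) ∧
      Jcost p w bound P A V Q ustar =
        ⨅ u : {u // Feasible cache u}, Jcost p w bound P A V Q u.val := by
  classical
  set i : Idx cache := ⟨(n, m), hm⟩ with hi
  have hserved : Served ustar n m := by
    by_cases hn : n = 0
    · exact Or.inl ⟨hn, by rw [← hn]; exact hun⟩
    · exact Or.inr ⟨hn, Or.inr hun⟩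
  -- extract q₀ = min Φ
  have hne : (Phi p w bound P A V ustar i Q).min ≠ ⊤ := by
    intro h; rw [h] at hthr
    exact absurd (top_le_iff.mp hthr) (by simp)
  obtain ⟨q₀, hq₀⟩ := Option.ne_none_iff_exists'.mp hne
  have hq₀mem : q₀ ∈ Phi p w bound P A V ustar i Q := Finset.mem_of_min hq₀
  have hq₀le : q₀ ≤ Q i := by
    rw [hq₀] at hthr; exact WithTop.coe_le_coe.mp hthr
  have hdom : ∀ v, Feasible cache v → v ≠ ustar →
      Jcost p w bound P A V (Function.update Q i q₀) ustar -
        Jcost p w bound P A V (Function.update Q i q₀) v ≤ 0 := by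
    have := hq₀mem
    simp only [Phi, Finset.mem_filter] at this
    exact this.2
  set Q' : Idx cache → ℕ := Function.update Q i q₀ with hQ'
  have hQ'le : ∀ j, Q' j ≤ Q j := by
    intro j
    rcases eq_or_ne j i with h | h
    · subst h; simpa [Q', Function.update_self] using hq₀le
    · simp [Q', Function.update_of_ne h]
  have hTu : ∀ a, T bound Q ustar (A a) = T bound Q' ustar (A a) := by
    intro a; funext j
    unfold T
    by_cases hs : Served ustar j.val.1 j.val.2
    · simp [hs]
    · have hji : j ≠ i := by
        intro h; subst h; exact hs hserved
      simp [hs, Q', Function.update_of_ne hji]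
  have hTbd : ∀ (R : Idx cache → ℕ) (u : Fin (N + 1) → Option (Fin M)) (a : ι) (j : Idx cache),
      T bound R u (A a) j ≤ bound j := by
    intro R u a j; unfold T; split <;> exact min_le_right _ _
  have hTv_le : ∀ (v : Fin (N + 1) → Option (Fin M)) (a : ι) (j : Idx cache),
      T bound Q' v (A a) j ≤ T bound Q v (A a) j := by
    intro v a j; unfold T
    split
    · exact le_rfl
    · exact min_le_min (Nat.add_le_add_right (hQ'le j) _) le_rfl
  have key : ∀ v, Jcost p w bound P A V Q ustar - Jcost p w bound P A V Q v ≤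
      Jcost p w bound P A V Q' ustar - Jcost p w bound P A V Q' v := by
    intro v
    have h2 : ∀ a, V (T bound Q' v (A a)) ≤ V (T bound Q v (A a)) := fun a =>
      hV _ _ (hTbd _ _ a) (hTbd _ _ a) (hTv_le v a)
    have hsum : ∑ a, P a * V (T bound Q' v (A a)) ≤ ∑ a, P a * V (T bound Q v (A a)) :=
      Finset.sum_le_sum fun a _ => mul_le_mul_of_nonneg_left (h2 a) (hP a)
    have hsumu : (∑ a, P a * V (T bound Q ustar (A a))) =
        ∑ a, P a * V (T bound Q' ustar (A a)) := by
      refine Finset.sum_congr rfl fun a _ => by rw [hTu a]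
    simp only [Jcost, gcost]
    rw [hsumu]
    linarith
  have hmain : ∀ v, Feasible cache v →
      Jcost p w bound P A V Q ustar - Jcost p w bound P A V Q v ≤ 0 := by
    intro v hv
    rcases eq_or_ne v ustar with h | h
    · subst h; simp
    · exact le_trans (key v) (hdom v hv h)
  refine ⟨hmain, ?_⟩
  have hlb : ∀ u : {u // Feasible cache u}, Jcost p w bound P A V Q ustar ≤
      Jcost p w bound P A V Q u.val := fun u => by linarith [hmain u.val u.property]
  have hbdd : BddBelow (Set.range fun u : {u // Feasible cache u} =>
      Jcost p w bound P A V Q u.val) := by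
    refine ⟨Jcost p w bound P A V Q ustar, ?_⟩
    rintro x ⟨u, rfl⟩; exact hlb u
  exact le_antisymm (le_ciInf hlb) (ciInf_le hbdd ⟨ustar, hustar⟩)

end HetNet
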